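/- arXiv:1801.00696 — 6 statements merged into one kernel-verified Lean document; each statement's English description precedes it below -/
import Mathlib

section
/- Let d > 0, L := d/√2 and α ≥ 0. The equation α·sin(kL) + 2√2·k·cos(kL) = 0 has exactly one solution k in the interval [π/(2L), π/L), and it has no solution k in the interval (0, π/(2L)). Moreover, for α = 0 this solution equals π/(2L), and for α > 0 it lies in the open interval (π/(2L), π/L). -/
open Real Set

/-- For `d > 0`, `L = d/√2`, `α ≥ 0`, the equation
`α sin(kL) + 2√2 k cos(kL) = 0` has exactly one solution in `[π/(2L), π/L)`, no
solution in `(0, π/(2L))`; for `α = 0` the solution is `π/(2L)`, and for `α > 0`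
it lies in `(π/(2L), π/L)`. -/
theorem first_robin_dirichlet_root
    (d : ℝ) (hd : 0 < d) (L : ℝ) (hL : L = d / Real.sqrt 2)
    (α : ℝ) (hα : 0 ≤ α) :
    (∃! k : ℝ, k ∈ Set.Ico (π / (2 * L)) (π / L) ∧
        α * Real.sin (k * L) + 2 * Real.sqrt 2 * k * Real.cos (k * L) = 0) ∧
    (∀ k ∈ Set.Ioo (0:ℝ) (π / (2 * L)),
        α * Real.sin (k * L) + 2 * Real.sqrt 2 * k * Real.cos (k * L) ≠ 0) ∧
    (α = 0 → ∀ k ∈ Set.Ico (π / (2 * L)) (π / L),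
        α * Real.sin (k * L) + 2 * Real.sqrt 2 * k * Real.cos (k * L) = 0 →
        k = π / (2 * L)) ∧
    (0 < α → ∀ k ∈ Set.Ico (π / (2 * L)) (π / L),
        α * Real.sin (k * L) + 2 * Real.sqrt 2 * k * Real.cos (k * L) = 0 →
        k ∈ Set.Ioo (π / (2 * L)) (π / L)) := by
  have hL0 : 0 < L := by rw [hL]; positivity
  have hs2 : (0:ℝ) < Real.sqrt 2 := by positivity
  set a := π / (2 * L) with ha
  set b := π / L with hb
  have haL : a * L = π / 2 := by rw [ha]; field_simp
  have hbL : b * L = π := by rw [hb]; field_simp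
  have ha0 : 0 < a := by rw [ha]; positivity
  have hab : a < b := by
    rw [ha, hb]
    exact div_lt_div_of_pos_left pi_pos hL0 (by linarith)
  have hsinA : Real.sin (a * L) = 1 := by rw [haL, Real.sin_pi_div_two]
  have hcosA : Real.cos (a * L) = 0 := by rw [haL, Real.cos_pi_div_two]
  have hsinB : Real.sin (b * L) = 0 := by rw [hbL, Real.sin_pi]
  have hcosB : Real.cos (b * L) = -1 := by rw [hbL, Real.cos_pi]
  have hmemθ : ∀ k, a < k → k < b → π/2 < k*L ∧ k*L < π := by
    intro k h1 h2
    constructor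
    · calc π/2 = a * L := haL.symm
        _ < k * L := mul_lt_mul_of_pos_right h1 hL0
    · calc k * L < b * L := mul_lt_mul_of_pos_right h2 hL0
        _ = π := hbL
  have hsinpos : ∀ k, a < k → k < b → 0 < Real.sin (k*L) := by
    intro k h1 h2
    obtain ⟨m1, m2⟩ := hmemθ k h1 h2
    exact Real.sin_pos_of_pos_of_lt_pi (lt_trans (by positivity) m1) m2
  have hcosneg : ∀ k, a < k → k < b → Real.cos (k*L) < 0 := by
    intro k h1 h2
    obtain ⟨m1, m2⟩ := hmemθ k h1 h2
    exact Real.cos_neg_of_pi_div_two_lt_of_lt m1 (by linarith [pi_pos])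
  have htanmono : ∀ k1 k2, a < k1 → k1 < k2 → k2 < b →
      Real.tan (k1*L) < Real.tan (k2*L) := by
    intro k1 k2 h1 h12 h2
    obtain ⟨p1, q1⟩ := hmemθ k1 h1 (lt_trans h12 h2)
    obtain ⟨p2, q2⟩ := hmemθ k2 (lt_trans h1 h12) h2
    have e1 : Real.tan (k1*L) = Real.tan (k1*L - π) := (Real.tan_periodic.sub_eq _).symm
    have e2 : Real.tan (k2*L) = Real.tan (k2*L - π) := (Real.tan_periodic.sub_eq _).symm
    rw [e1, e2]
    apply Real.strictMonoOn_tan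
    · exact Set.mem_Ioo.mpr ⟨by linarith, by linarith [pi_pos]⟩
    · exact Set.mem_Ioo.mpr ⟨by linarith, by linarith [pi_pos]⟩
    · have : k1 * L < k2 * L := mul_lt_mul_of_pos_right h12 hL0
      linarith
  -- no solution in (0, a)
  have hno : ∀ k ∈ Set.Ioo (0:ℝ) a,
      α * Real.sin (k * L) + 2 * Real.sqrt 2 * k * Real.cos (k * L) ≠ 0 := by
    rintro k ⟨hk0, hka⟩
    have hkL0 : 0 < k * L := mul_pos hk0 hL0
    have hkL2 : k * L < π / 2 := by
      calc k * L < a * L := mul_lt_mul_of_pos_right hka hL0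
        _ = π / 2 := haL
    have hs : 0 < Real.sin (k * L) :=
      Real.sin_pos_of_pos_of_lt_pi hkL0 (by linarith [pi_pos])
    have hc : 0 < Real.cos (k * L) :=
      Real.cos_pos_of_mem_Ioo ⟨by linarith [pi_pos], hkL2⟩
    have t1 : 0 ≤ α * Real.sin (k * L) := mul_nonneg hα hs.le
    have t2 : 0 < 2 * Real.sqrt 2 * k * Real.cos (k * L) :=
      mul_pos (mul_pos (mul_pos two_pos hs2) hk0) hc
    intro heq; linarith
  -- α = 0 forces k = a
  have hzero : α = 0 → ∀ k ∈ Set.Ico a b,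
      α * Real.sin (k * L) + 2 * Real.sqrt 2 * k * Real.cos (k * L) = 0 →
      k = a := by
    rintro hα0 k ⟨hk1, hk2⟩ heq
    subst hα0
    simp only [zero_mul, zero_add] at heq
    by_contra hne
    have h1 : a < k := lt_of_le_of_ne hk1 (Ne.symm hne)
    have hc : Real.cos (k*L) < 0 := hcosneg k h1 hk2
    have hp : 0 < 2 * Real.sqrt 2 * k := mul_pos (mul_pos two_pos hs2) (by linarith)
    nlinarith
  -- α > 0 forces k ∈ Ioo a b
  have hposmem : 0 < α → ∀ k ∈ Set.Ico a b,
      α * Real.sin (k * L) + 2 * Real.sqrt 2 * k * Real.cos (k * L) = 0 →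
      k ∈ Set.Ioo a b := by
    rintro hα' k ⟨hk1, hk2⟩ heq
    refine ⟨?_, hk2⟩
    rcases eq_or_lt_of_le hk1 with h | h
    · exfalso
      rw [← h, hsinA, hcosA] at heq
      simp at heq
      linarith
    · exact h
  -- tan relation for roots in the open interval (α > 0)
  have hroot_tan : 0 < α → ∀ k, a < k → k < b →
      α * Real.sin (k * L) + 2 * Real.sqrt 2 * k * Real.cos (k * L) = 0 →
      α * Real.tan (k * L) = -(2 * Real.sqrt 2 * k) := by
    intro hα' k h1 h2 heq
    have hc : Real.cos (k*L) < 0 := hcosneg k h1 h2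
    rw [Real.tan_eq_sin_div_cos]
    field_simp [ne_of_lt hc]
    linarith
  refine ⟨?_, hno, hzero, hposmem⟩
  rcases eq_or_lt_of_le hα with hα0 | hα'
  · -- α = 0: unique root is a
    refine ⟨a, ⟨⟨le_refl a, hab⟩, by simp [hcosA, ← hα0]⟩, ?_⟩
    rintro y ⟨hy, hyeq⟩
    exact hzero hα0.symm y hy hyeq
  · -- α > 0: existence by IVT
    set f : ℝ → ℝ := fun k => α * Real.sin (k * L) + 2 * Real.sqrt 2 * k * Real.cos (k * L)
      with hf
    have hfa : f a = α := by simp [hf, hsinA, hcosA]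
    have hfb : f b = -(2 * Real.sqrt 2 * b) := by simp [hf, hsinB, hcosB]
    have hcont : ContinuousOn f (Set.Icc a b) := by
      apply Continuous.continuousOn; fun_prop
    have hivt : Set.Ioo (f b) (f a) ⊆ f '' Set.Ioo a b :=
      intermediate_value_Ioo' hab.le hcont
    have h0mem : (0:ℝ) ∈ Set.Ioo (f b) (f a) := by
      rw [hfa, hfb]
      constructor
      · have : 0 < 2 * Real.sqrt 2 * b := mul_pos (mul_pos two_pos hs2) (by linarith)
        linarith
      · exact hα'
    obtain ⟨k0, hk0mem, hk0eq⟩ := hivt h0mem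
    have huniq : ∀ k1 k2, k1 ∈ Set.Ioo a b → k2 ∈ Set.Ioo a b →
        f k1 = 0 → f k2 = 0 → k1 = k2 := by
      rintro k1 k2 ⟨p1, q1⟩ ⟨p2, q2⟩ e1 e2
      by_contra hne
      rcases lt_or_gt_of_ne hne with h | h
      · have t := htanmono k1 k2 p1 h q2
        have r1 := hroot_tan hα' k1 p1 q1 e1
        have r2 := hroot_tan hα' k2 p2 q2 e2
        have : α * Real.tan (k1*L) < α * Real.tan (k2*L) :=
          mul_lt_mul_of_pos_left t hα'
        rw [r1, r2] at this
        nlinarith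
      · have t := htanmono k2 k1 p2 h q1
        have r1 := hroot_tan hα' k1 p1 q1 e1
        have r2 := hroot_tan hα' k2 p2 q2 e2
        have : α * Real.tan (k2*L) < α * Real.tan (k1*L) :=
          mul_lt_mul_of_pos_left t hα'
        rw [r1, r2] at this
        nlinarith
    refine ⟨k0, ⟨⟨hk0mem.1.le, hk0mem.2⟩, hk0eq⟩, ?_⟩
    rintro y ⟨hy, hyeq⟩
    have hymem : y ∈ Set.Ioo a b := hposmem hα' y hy hyeq
    exact huniq y k0 hymem hk0mem hyeq hk0eq
end

section
/- Let d > 0, L := d/√2 and α > 0. For every n ∈ ℕ (n ≥ 0) the equation α·sin(kL) + 2√2·k·cos(kL) = 0 has exactly one solution k in the open interval ((n + 1/2)·π/L, (n + 1)·π/L), and every positive solution of this equation lies in one of these intervals. In particular, the n-th eigenvalue ε_n^D(α) of the Robin–Dirichlet Laplacian satisfies ((n + 1/2)·π/L)² < ε_n^D(α) < ((n + 1)·π/L)². -/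
open Real Set

private lemma aux_loc {t : ℝ} (ht : 0 < t) (h : Real.sin t * Real.cos t < 0) :
    ∃ n : ℕ, ((n : ℝ) + 1/2) * π < t ∧ t < ((n : ℝ) + 1) * π := by
  have hπ : 0 < π := Real.pi_pos
  have hm0 : 0 ≤ ⌊t / π⌋ := Int.floor_nonneg.2 (by positivity)
  set m : ℤ := ⌊t / π⌋ with hm
  have h1 : (m : ℝ) * π ≤ t := by
    have := Int.floor_le (t / π)
    rw [← hm] at this
    calc (m : ℝ) * π ≤ (t / π) * π := by nlinarith
    _ = t := by field_simp
  have h2 : t < ((m : ℝ) + 1) * π := by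
    have := Int.lt_floor_add_one (t / π)
    rw [← hm] at this
    have h' : t / π * π < ((m : ℝ) + 1) * π := by nlinarith
    calc t = t / π * π := by field_simp
    _ < _ := h'
  set s := t - (m : ℝ) * π with hs
  have hs0 : 0 ≤ s := by simp only [hs]; linarith
  have hs1 : s < π := by simp only [hs]; linarith
  have hsq : ((-1 : ℝ)) ^ m * ((-1 : ℝ)) ^ m = 1 := by
    rw [← zpow_add₀ (by norm_num : (-1 : ℝ) ≠ 0)]
    exact Even.neg_one_zpow ⟨m, rfl⟩
  have hprod : Real.sin s * Real.cos s < 0 := by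
    have e1 := Real.sin_sub_int_mul_pi t m
    have e2 := Real.cos_sub_int_mul_pi t m
    calc Real.sin s * Real.cos s
        = ((-1 : ℝ) ^ m * (-1 : ℝ) ^ m) * (Real.sin t * Real.cos t) := by
          rw [hs, e1, e2]; ring
    _ = Real.sin t * Real.cos t := by rw [hsq, one_mul]
    _ < 0 := h
  have hsinn : 0 ≤ Real.sin s := Real.sin_nonneg_of_nonneg_of_le_pi hs0 hs1.le
  have hcos : Real.cos s < 0 := by
    rcases lt_or_ge (Real.cos s) 0 with hc | hc
    · exact hc
    · nlinarith
  have hs2 : π / 2 < s := by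
    by_contra hle
    push_neg at hle
    have : 0 ≤ Real.cos s := Real.cos_nonneg_of_mem_Icc ⟨by linarith, hle⟩
    linarith
  have hcast : ((m.toNat : ℕ) : ℝ) = (m : ℝ) := by exact_mod_cast Int.toNat_of_nonneg hm0
  refine ⟨m.toNat, ?_, ?_⟩
  · rw [hcast]; nlinarith
  · rw [hcast]; nlinarith

private lemma aux_eu (L α : ℝ) (hL : 0 < L) (hα : 0 < α) (n : ℕ) :
    ∃! x : ℝ, x ∈ Set.Ioo (((n : ℝ) + 1/2) * π / L) (((n : ℝ) + 1) * π / L) ∧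
      α * Real.sin (x * L) + 2 * Real.sqrt 2 * x * Real.cos (x * L) = 0 := by
  have hπ : 0 < π := Real.pi_pos
  have hs2 : (0 : ℝ) < Real.sqrt 2 := by positivity
  set a := ((n : ℝ) + 1/2) * π / L with ha
  set b := ((n : ℝ) + 1) * π / L with hb
  have ha0 : 0 < a := by
    apply div_pos (by positivity) hL
  have hab : a < b := by
    rw [ha, hb, div_lt_div_iff_of_pos_right hL]
    nlinarith
  have haL : a * L = ((n : ℝ) + 1/2) * π := div_mul_cancel₀ _ hL.ne'
  have hbL : b * L = ((n : ℝ) + 1) * π := div_mul_cancel₀ _ hL.ne'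
  have hsa : Real.sin (a * L) = (-1 : ℝ) ^ n := by
    rw [haL, show ((n : ℝ) + 1/2) * π = π/2 + (n : ℤ) * π by push_cast; ring,
      Real.sin_add_int_mul_pi, Real.sin_pi_div_two, mul_one, zpow_natCast]
  have hca : Real.cos (a * L) = 0 := by
    rw [haL, show ((n : ℝ) + 1/2) * π = π/2 + (n : ℤ) * π by push_cast; ring,
      Real.cos_add_int_mul_pi, Real.cos_pi_div_two, mul_zero]
  have hsb : Real.sin (b * L) = 0 := by
    rw [hbL, show ((n : ℝ) + 1) * π = ((n + 1 : ℕ) : ℤ) * π by push_cast; ring]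
    exact Real.sin_int_mul_pi _
  have hcb : Real.cos (b * L) = (-1 : ℝ) ^ (n + 1) := by
    rw [hbL, show ((n : ℝ) + 1) * π = 0 + ((n + 1 : ℕ) : ℤ) * π by push_cast; ring,
      Real.cos_add_int_mul_pi, Real.cos_zero, mul_one, zpow_natCast]
  set g : ℝ → ℝ := fun x => α * Real.sin (x * L) + 2 * Real.sqrt 2 * x * Real.cos (x * L)
    with hg
  have hgc : ContinuousOn g (Set.Icc a b) := by
    apply Continuous.continuousOn
    fun_prop
  have hga : g a = α * (-1 : ℝ) ^ n := by simp [hg, hsa, hca]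
  have hgb : g b = 2 * Real.sqrt 2 * b * (-1 : ℝ) ^ (n + 1) := by simp [hg, hsb, hcb]
  have hb0 : 0 < b := ha0.trans hab
  obtain ⟨x₀, hx₀m, hx₀⟩ : ∃ x ∈ Set.Ioo a b, g x = 0 := by
    rcases Nat.even_or_odd n with he | ho
    · have h1 : g a = α := by rw [hga, he.neg_one_pow, mul_one]
      have h2 : g b = -(2 * Real.sqrt 2 * b) := by
        rw [hgb, (he.add_one).neg_one_pow]; ring
      have hmem : (0 : ℝ) ∈ Set.Ioo (g b) (g a) := by
        rw [h1, h2]; exact ⟨by nlinarith, hα⟩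
      obtain ⟨x, hx, hgx⟩ := intermediate_value_Ioo' hab.le hgc hmem
      exact ⟨x, hx, hgx⟩
    · have h1 : g a = -α := by rw [hga, ho.neg_one_pow, mul_neg_one]
      have h2 : g b = 2 * Real.sqrt 2 * b := by
        rw [hgb, (ho.add_one).neg_one_pow, mul_one]
      have hmem : (0 : ℝ) ∈ Set.Ioo (g a) (g b) := by
        rw [h1, h2]; exact ⟨by nlinarith, by nlinarith⟩
      obtain ⟨x, hx, hgx⟩ := intermediate_value_Ioo hab.le hgc hmem
      exact ⟨x, hx, hgx⟩
  have key : ∀ z ∈ Set.Ioo a b, g z = 0 →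
      Real.tan (z * L - ((n : ℝ) + 1) * π) = -(2 * Real.sqrt 2 * z) / α ∧
      (z * L - ((n : ℝ) + 1) * π) ∈ Set.Ioo (-(π/2)) (π/2) := by
    rintro z ⟨hz1, hz2⟩ hz
    have hzL1 : ((n : ℝ) + 1/2) * π < z * L := by
      rw [← haL]; exact mul_lt_mul_of_pos_right hz1 hL
    have hzL2 : z * L < ((n : ℝ) + 1) * π := by
      rw [← hbL]; exact mul_lt_mul_of_pos_right hz2 hL
    have hu1 : -(π/2) < z * L - ((n : ℝ) + 1) * π := by nlinarith
    have hu2 : z * L - ((n : ℝ) + 1) * π < 0 := by linarith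
    have humem : (z * L - ((n : ℝ) + 1) * π) ∈ Set.Ioo (-(π/2)) (π/2) :=
      ⟨hu1, by linarith⟩
    have hcu : 0 < Real.cos (z * L - ((n : ℝ) + 1) * π) := Real.cos_pos_of_mem_Ioo humem
    have hrw : ((n : ℝ) + 1) * π = ((n + 1 : ℕ) : ℤ) * π := by push_cast; ring
    have hcos_eq : Real.cos (z * L - ((n : ℝ) + 1) * π)
        = (-1 : ℝ) ^ (n + 1) * Real.cos (z * L) := by
      rw [hrw, Real.cos_sub_int_mul_pi, zpow_natCast]
    have hsin_eq : Real.sin (z * L - ((n : ℝ) + 1) * π)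
        = (-1 : ℝ) ^ (n + 1) * Real.sin (z * L) := by
      rw [hrw, Real.sin_sub_int_mul_pi, zpow_natCast]
    have hczL : Real.cos (z * L) ≠ 0 := by
      intro h0
      rw [hcos_eq, h0, mul_zero] at hcu
      exact lt_irrefl _ hcu
    have heq : α * Real.sin (z * L) = -(2 * Real.sqrt 2 * z) * Real.cos (z * L) := by
      have hz' : α * Real.sin (z * L) + 2 * Real.sqrt 2 * z * Real.cos (z * L) = 0 := hz
      linarith
    refine ⟨?_, humem⟩
    have hne : ((-1 : ℝ) ^ (n + 1) * Real.cos (z * L)) ≠ 0 :=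
      mul_ne_zero (pow_ne_zero _ (by norm_num)) hczL
    rw [Real.tan_eq_sin_div_cos, hsin_eq, hcos_eq, div_eq_div_iff hne hα.ne']
    linear_combination ((-1 : ℝ) ^ (n + 1)) * heq
  have main : ∀ p q : ℝ, p ∈ Set.Ioo a b → q ∈ Set.Ioo a b → g p = 0 → g q = 0 →
      p < q → False := by
    intro p q hp hq hgp hgq hpq
    obtain ⟨hp1, hp2⟩ := key p hp hgp
    obtain ⟨hq1, hq2⟩ := key q hq hgq
    have hlt : p * L - ((n : ℝ) + 1) * π < q * L - ((n : ℝ) + 1) * π := by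
      have := mul_lt_mul_of_pos_right hpq hL
      linarith
    have hmono := Real.strictMonoOn_tan hp2 hq2 hlt
    rw [hp1, hq1] at hmono
    have hlt2 : -(2 * Real.sqrt 2 * q) / α < -(2 * Real.sqrt 2 * p) / α := by
      apply div_lt_div_of_pos_right ?_ hα
      nlinarith
    linarith
  refine ⟨x₀, ⟨hx₀m, hx₀⟩, ?_⟩
  rintro y ⟨hym, hy⟩
  by_contra hne
  rcases lt_or_gt_of_ne hne with hlt | hlt
  · exact main y x₀ hym hx₀m hy hx₀ hlt
  · exact main x₀ y hx₀m hym hx₀ hy hlt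

private lemma aux_mem (L α : ℝ) (hL : 0 < L) (hα : 0 < α) (x : ℝ) (hx : 0 < x)
    (heq : α * Real.sin (x * L) + 2 * Real.sqrt 2 * x * Real.cos (x * L) = 0) :
    ∃ n : ℕ, x ∈ Set.Ioo (((n : ℝ) + 1/2) * π / L) (((n : ℝ) + 1) * π / L) := by
  have hs2 : (0 : ℝ) < Real.sqrt 2 := by positivity
  have ht : 0 < x * L := mul_pos hx hL
  have hc : Real.cos (x * L) ≠ 0 := by
    intro h0
    rw [h0, mul_zero, add_zero] at heq
    have hs : Real.sin (x * L) = 0 := by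
      rcases mul_eq_zero.1 heq with h | h
      · exact absurd h hα.ne'
      · exact h
    have hpy := Real.sin_sq_add_cos_sq (x * L)
    rw [hs, h0] at hpy
    norm_num at hpy
  have hcc : 0 < Real.cos (x * L) ^ 2 := by positivity
  have hkey : α * (Real.sin (x * L) * Real.cos (x * L))
      = -(2 * Real.sqrt 2 * x) * Real.cos (x * L) ^ 2 := by
    linear_combination Real.cos (x * L) * heq
  have hprod : Real.sin (x * L) * Real.cos (x * L) < 0 := by
    nlinarith [mul_pos (mul_pos (mul_pos two_pos hs2) hx) hcc, hα, hkey]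
  obtain ⟨n, hn1, hn2⟩ := aux_loc ht hprod
  refine ⟨n, ?_, ?_⟩
  · rw [div_lt_iff₀ hL]; exact hn1
  · rw [lt_div_iff₀ hL]; exact hn2

/-- For `α > 0` the equation `α sin(kL) + 2√2 k cos(kL) = 0` has exactly
one solution in each interval `((n+1/2)π/L, (n+1)π/L)`, every positive solution lies in
one of these intervals, and consequently the eigenvalues `ε_n^D(α) = k_n²` (the `k_n`
being all positive solutions in increasing order) satisfy
`((n+1/2)π/L)² < ε_n^D(α) < ((n+1)π/L)²`. -/
theorem robin_dirichlet_roots_localization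
    (d : ℝ) (hd : 0 < d) (L : ℝ) (hL : L = d / Real.sqrt 2)
    (α : ℝ) (hα : 0 < α)
    (k : ℕ → ℝ) (hkpos : ∀ n, 0 < k n) (hkmono : StrictMono k)
    (hkeq : ∀ n, α * Real.sin (k n * L) + 2 * Real.sqrt 2 * k n * Real.cos (k n * L) = 0)
    (hkall : ∀ x : ℝ, 0 < x →
      α * Real.sin (x * L) + 2 * Real.sqrt 2 * x * Real.cos (x * L) = 0 → ∃ n, x = k n) :
    (∀ n : ℕ, ∃! x : ℝ, x ∈ Set.Ioo (((n : ℝ) + 1/2) * π / L) (((n : ℝ) + 1) * π / L) ∧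
        α * Real.sin (x * L) + 2 * Real.sqrt 2 * x * Real.cos (x * L) = 0) ∧
    (∀ x : ℝ, 0 < x →
        α * Real.sin (x * L) + 2 * Real.sqrt 2 * x * Real.cos (x * L) = 0 →
        ∃ n : ℕ, x ∈ Set.Ioo (((n : ℝ) + 1/2) * π / L) (((n : ℝ) + 1) * π / L)) ∧
    (∀ n : ℕ, (((n : ℝ) + 1/2) * π / L) ^ 2 < (k n) ^ 2 ∧
        (k n) ^ 2 < (((n : ℝ) + 1) * π / L) ^ 2) := by
  have hL0 : 0 < L := by rw [hL]; positivity
  have hπ : 0 < π := Real.pi_pos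
  have P1 : ∀ n : ℕ, ∃! x : ℝ,
      x ∈ Set.Ioo (((n : ℝ) + 1/2) * π / L) (((n : ℝ) + 1) * π / L) ∧
      α * Real.sin (x * L) + 2 * Real.sqrt 2 * x * Real.cos (x * L) = 0 :=
    fun n => aux_eu L α hL0 hα n
  have P2 : ∀ x : ℝ, 0 < x →
      α * Real.sin (x * L) + 2 * Real.sqrt 2 * x * Real.cos (x * L) = 0 →
      ∃ n : ℕ, x ∈ Set.Ioo (((n : ℝ) + 1/2) * π / L) (((n : ℝ) + 1) * π / L) :=
    fun x hx h => aux_mem L α hL0 hα x hx h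
  refine ⟨P1, P2, ?_⟩
  have hba : ∀ n m : ℕ, n < m → ((n : ℝ) + 1) * π / L ≤ ((m : ℝ) + 1/2) * π / L := by
    intro n m h
    have hnm : (n : ℝ) + 1 ≤ (m : ℝ) := by exact_mod_cast h
    rw [div_le_div_iff_of_pos_right hL0]
    nlinarith
  choose σ hσ using fun m => P2 (k m) (hkpos m) (hkeq m)
  have hx' : ∀ n : ℕ, ∃ x : ℝ,
      x ∈ Set.Ioo (((n : ℝ) + 1/2) * π / L) (((n : ℝ) + 1) * π / L) ∧
      α * Real.sin (x * L) + 2 * Real.sqrt 2 * x * Real.cos (x * L) = 0 :=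
    fun n => (P1 n).exists
  choose x hx1 hx2 using hx'
  have hxpos : ∀ n, 0 < x n :=
    fun n => lt_trans (div_pos (by positivity) hL0) (hx1 n).1
  choose τ hτ using fun n => hkall (x n) (hxpos n) (hx2 n)
  have hdisj : ∀ (y : ℝ) (n m : ℕ),
      y ∈ Set.Ioo (((n : ℝ) + 1/2) * π / L) (((n : ℝ) + 1) * π / L) →
      y ∈ Set.Ioo (((m : ℝ) + 1/2) * π / L) (((m : ℝ) + 1) * π / L) → n = m := by
    intro y n m h1 h2
    rcases lt_trichotomy n m with h | h | h
    · exfalso; linarith [h1.2, h2.1, hba n m h]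
    · exact h
    · exfalso; linarith [h2.2, h1.1, hba m n h]
  have hστ : ∀ n, σ (τ n) = n := by
    intro n
    apply hdisj (k (τ n)) (σ (τ n)) n (hσ (τ n))
    rw [← hτ n]; exact hx1 n
  have hσmono : StrictMono σ := by
    intro m m' h
    have hk : k m < k m' := hkmono h
    rcases lt_trichotomy (σ m) (σ m') with h1 | h1 | h1
    · exact h1
    · exfalso
      obtain ⟨x₀, _, hu⟩ := P1 (σ m)
      have e1 := hu (k m) ⟨hσ m, hkeq m⟩
      have e2 := hu (k m') ⟨by rw [h1]; exact hσ m', hkeq m'⟩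
      rw [e1, e2] at hk; exact lt_irrefl _ hk
    · exfalso
      linarith [(hσ m').2, (hσ m).1, hba (σ m') (σ m) h1, hk]
  have hτmono : StrictMono τ := by
    intro n n' h
    have hkk : k (τ n) < k (τ n') := by
      rw [← hτ n, ← hτ n']
      linarith [(hx1 n).2, (hx1 n').1, hba n n' h]
    exact hkmono.lt_iff_lt.1 hkk
  have hτid : ∀ n, τ n = n := by
    intro n
    have h1 : n ≤ τ n := hτmono.le_apply
    have h2 : τ n ≤ σ (τ n) := hσmono.le_apply
    rw [hστ n] at h2
    omega
  intro n
  have e : x n = k n := by rw [hτ n, hτid n]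
  have hkin : k n ∈ Set.Ioo (((n : ℝ) + 1/2) * π / L) (((n : ℝ) + 1) * π / L) := by
    rw [← e]; exact hx1 n
  have hposa : (0 : ℝ) < ((n : ℝ) + 1/2) * π / L := div_pos (by positivity) hL0
  exact ⟨by nlinarith [hkin.1, hposa], by nlinarith [hkin.2, hkpos n]⟩
end

section
/- Let d > 0 and Ω := {(x,y) ∈ ℝ² : x ≥ 0, y ≥ 0, |x−y| ≤ d}. There exists a constant c > 0 such that for every continuously differentiable function φ : ℝ² → ℂ with compact support, ∫₀^∞ |φ(x,x)|² dx ≤ c · ∫_Ω ( |φ(x,y)|² + ‖∇φ(x,y)‖² ) d(x,y). -/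
open Real Set MeasureTheory

/-- The configuration domain `Ω = {(x,y) : x ≥ 0, y ≥ 0, |x - y| ≤ d}`. -/
def pairDomain (d : ℝ) : Set (ℝ × ℝ) :=
  {p : ℝ × ℝ | 0 ≤ p.1 ∧ 0 ≤ p.2 ∧ |p.1 - p.2| ≤ d}

lemma trace_pointwise (d : ℝ) (hd : 0 < d) (φ : ℝ × ℝ → ℂ) (hφ : ContDiff ℝ 1 φ)
    (x : ℝ) :
    ‖φ (x, x)‖ ^ 2 ≤ (1/d + 1) * ∫ t in (0:ℝ)..d,
      (‖φ (x, x + t)‖ ^ 2 + ‖fderiv ℝ φ (x, x + t)‖ ^ 2) := by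
  set g : ℝ → ℂ := fun t => φ (x, x + t) with hgdef
  set D : ℝ → ℂ := fun t => fderiv ℝ φ (x, x + t) (0, 1) with hDdef
  have hpath : ∀ t : ℝ, HasDerivAt (fun t : ℝ => ((x : ℝ), x + t)) ((0:ℝ), (1:ℝ)) t :=
    fun t => (hasDerivAt_const t x).prodMk ((hasDerivAt_id t).const_add x)
  have hg : ∀ t, HasDerivAt g (D t) t := by
    intro t
    exact ((hφ.differentiable one_ne_zero (x, x + t)).hasFDerivAt).comp_hasDerivAt t (hpath t)
  -- continuity facts
  have hφc : Continuous φ := hφ.continuous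
  have hDc' : Continuous (fderiv ℝ φ) := hφ.continuous_fderiv one_ne_zero
  have hpc : Continuous (fun t : ℝ => ((x : ℝ), x + t)) := by fun_prop
  have hgc : Continuous g := hφc.comp hpc
  have hDcc : Continuous D := ((hDc'.comp hpc).clm_apply continuous_const)
  set H : ℝ → ℝ := fun t => 2 * (g t).re * (D t).re + 2 * (g t).im * (D t).im with hHdef
  have hHc : Continuous H := by fun_prop
  have hnormsq : ∀ z : ℂ, ‖z‖ ^ 2 = z.re * z.re + z.im * z.im := by
    intro z
    rw [Complex.sq_norm, Complex.normSq_apply]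
  have hh : ∀ t, HasDerivAt (fun t => ‖g t‖ ^ 2) (H t) t := by
    intro t
    have hu : HasDerivAt (fun t => (g t).re) ((D t).re) t :=
      Complex.reCLM.hasFDerivAt.comp_hasDerivAt t (hg t)
    have hv : HasDerivAt (fun t => (g t).im) ((D t).im) t :=
      Complex.imCLM.hasFDerivAt.comp_hasDerivAt t (hg t)
    have := ((hu.mul hu).add (hv.mul hv))
    have heq : (fun t => ‖g t‖ ^ 2) =
        (fun t => (g t).re * (g t).re + (g t).im * (g t).im) := by
      funext s; exact hnormsq (g s)
    rw [heq, hHdef]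
    exact this.congr_deriv (by beta_reduce; ring)
  -- bound |H t| ≤ F(x, x+t)
  have hDle : ∀ t, ‖D t‖ ≤ ‖fderiv ℝ φ (x, x + t)‖ := by
    intro t
    have := (fderiv ℝ φ (x, x + t)).le_opNorm ((0:ℝ), (1:ℝ))
    have hn : ‖((0:ℝ), (1:ℝ))‖ = 1 := by
      simp [Prod.norm_def]
    rw [hn, mul_one] at this
    exact this
  have hHle : ∀ t, |H t| ≤ ‖g t‖ ^ 2 + ‖fderiv ℝ φ (x, x + t)‖ ^ 2 := by
    intro t
    have h1 : |H t| ≤ ‖g t‖ ^ 2 + ‖D t‖ ^ 2 := by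
      rw [hnormsq (g t), hnormsq (D t), hHdef]
      rw [abs_le]
      constructor <;> beta_reduce <;>
        nlinarith [sq_nonneg ((g t).re - (D t).re), sq_nonneg ((g t).im - (D t).im),
          sq_nonneg ((g t).re + (D t).re), sq_nonneg ((g t).im + (D t).im)]
    have h2 : ‖D t‖ ^ 2 ≤ ‖fderiv ℝ φ (x, x + t)‖ ^ 2 := by
      have := hDle t
      nlinarith [norm_nonneg (D t)]
    linarith
  set Ftot : ℝ → ℝ := fun t => ‖g t‖ ^ 2 + ‖fderiv ℝ φ (x, x + t)‖ ^ 2 with hFtot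
  have hFtotc : Continuous Ftot := by fun_prop
  have hFtotnn : ∀ t, 0 ≤ Ftot t := fun t => by positivity
  set C : ℝ := ∫ t in (0:ℝ)..d, |H t| with hC
  have key1 : ∀ s ∈ Set.Icc (0:ℝ) d, ‖g 0‖ ^ 2 ≤ ‖g s‖ ^ 2 + C := by
    intro s hs
    have hint : IntervalIntegrable H volume 0 s := (hHc.intervalIntegrable 0 s)
    have ftc : ∫ t in (0:ℝ)..s, H t = ‖g s‖ ^ 2 - ‖g 0‖ ^ 2 :=
      intervalIntegral.integral_eq_sub_of_hasDerivAt (fun t _ => hh t) hint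
    have habs : |∫ t in (0:ℝ)..s, H t| ≤ ∫ t in (0:ℝ)..s, |H t| :=
      intervalIntegral.abs_integral_le_integral_abs hs.1
    have hmono : ∫ t in (0:ℝ)..s, |H t| ≤ C := by
      rw [hC]
      apply intervalIntegral.integral_mono_interval le_rfl hs.1 hs.2
      · exact Filter.Eventually.of_forall fun t => abs_nonneg _
      · exact (hHc.abs.intervalIntegrable 0 d)
    have h3 : ‖g 0‖ ^ 2 = ‖g s‖ ^ 2 - ∫ t in (0:ℝ)..s, H t := by linarith [ftc]
    have h4 : -(∫ t in (0:ℝ)..s, H t) ≤ |∫ t in (0:ℝ)..s, H t| := neg_le_abs _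
    linarith [le_trans habs hmono]
  -- integrate key1 over s ∈ [0, d]
  have hint2 : d * ‖g 0‖ ^ 2 ≤ (∫ s in (0:ℝ)..d, ‖g s‖ ^ 2) + d * C := by
    have h5 : ∫ s in (0:ℝ)..d, (‖g 0‖ ^ 2 : ℝ) ≤ ∫ s in (0:ℝ)..d, (‖g s‖ ^ 2 + C) := by
      apply intervalIntegral.integral_mono_on hd.le
      · exact intervalIntegrable_const
      · exact ((hgc.norm.pow 2).add continuous_const).intervalIntegrable 0 d
      · exact key1
    rw [intervalIntegral.integral_const, intervalIntegral.integral_add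
        (by have h : Continuous fun s => ‖g s‖ ^ 2 := hgc.norm.pow 2; exact h.intervalIntegrable 0 d) intervalIntegrable_const,
      intervalIntegral.integral_const] at h5
    simp only [smul_eq_mul, sub_zero] at h5
    linarith
  have hb1 : ∫ s in (0:ℝ)..d, ‖g s‖ ^ 2 ≤ ∫ s in (0:ℝ)..d, Ftot s := by
    apply intervalIntegral.integral_mono_on hd.le
      (by have h : Continuous fun s => ‖g s‖ ^ 2 := hgc.norm.pow 2; exact h.intervalIntegrable 0 d) (hFtotc.intervalIntegrable 0 d)
    intro s _
    have : (0:ℝ) ≤ ‖fderiv ℝ φ (x, x + s)‖ ^ 2 := by positivity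
    simp only [hFtot]; linarith
  have hb2 : C ≤ ∫ s in (0:ℝ)..d, Ftot s := by
    rw [hC]
    apply intervalIntegral.integral_mono_on hd.le
      (hHc.abs.intervalIntegrable 0 d) (hFtotc.intervalIntegrable 0 d)
    intro s _
    exact hHle s
  have hInn : 0 ≤ ∫ s in (0:ℝ)..d, Ftot s :=
    intervalIntegral.integral_nonneg hd.le fun s _ => hFtotnn s
  have hg0 : g 0 = φ (x, x) := by simp [hgdef]
  have : ‖φ (x, x)‖ ^ 2 ≤ (1/d + 1) * ∫ s in (0:ℝ)..d, Ftot s := by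
    rw [← hg0]
    have hd' : 0 < d := hd
    rw [div_add' _ _ _ hd'.ne']
    rw [div_mul_eq_mul_div, le_div_iff₀ hd']
    nlinarith [hb1, hb2, hint2]
  exact this

/-- trace estimate along the diagonal. There is a constant `c > 0` such
that for every `C¹` compactly supported `φ : ℝ² → ℂ`,
`∫₀^∞ |φ(x,x)|² dx ≤ c ∫_Ω (|φ|² + ‖∇φ‖²)`. -/
theorem diagonal_trace_estimate (d : ℝ) (hd : 0 < d) :
    ∃ c : ℝ, 0 < c ∧
      ∀ φ : ℝ × ℝ → ℂ, ContDiff ℝ 1 φ → HasCompactSupport φ →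
        ∫ x in Set.Ici (0:ℝ), ‖φ (x, x)‖ ^ 2 ≤
          c * ∫ p in pairDomain d, (‖φ p‖ ^ 2 + ‖fderiv ℝ φ p‖ ^ 2) := by
  refine ⟨1/d + 1, by positivity, ?_⟩
  intro φ hφ hsupp
  set F : ℝ × ℝ → ℝ := fun p => ‖φ p‖ ^ 2 + ‖fderiv ℝ φ p‖ ^ 2 with hFdef
  have hφc : Continuous φ := hφ.continuous
  have hDc : Continuous (fderiv ℝ φ) := hφ.continuous_fderiv one_ne_zero
  have hFc : Continuous F := by fun_prop
  have hFsupp : HasCompactSupport F := by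
    apply HasCompactSupport.add
    · exact hsupp.comp_left (g := fun z : ℂ => ‖z‖ ^ 2) (by simp)
    · exact (hsupp.fderiv ℝ).comp_left (g := fun L : ℝ × ℝ →L[ℝ] ℂ => ‖L‖ ^ 2) (by simp)
  have hFint : Integrable F := hFc.integrable_of_hasCompactSupport hFsupp
  have hFnn : ∀ p, 0 ≤ F p := fun p => by positivity
  set S : Set (ℝ × ℝ) :=
    {p : ℝ × ℝ | 0 ≤ p.1} ∩ {p | p.1 < p.2} ∩ {p | p.2 ≤ p.1 + d} with hSdef
  have hSmeas : MeasurableSet S := by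
    refine (MeasurableSet.inter (MeasurableSet.inter ?_ ?_) ?_)
    · exact measurableSet_le measurable_const measurable_fst
    · exact measurableSet_lt measurable_fst measurable_snd
    · exact measurableSet_le measurable_snd (measurable_fst.add_const d)
  have hSsub : S ⊆ pairDomain d := by
    rintro ⟨a, b⟩ ⟨⟨h1, h2⟩, h3⟩
    refine ⟨h1, le_of_lt (lt_of_le_of_lt h1 h2), ?_⟩
    rw [abs_le]
    constructor <;> simp_all <;> linarith
  set I : ℝ → ℝ := fun x => ∫ y in Set.Ioc x (x + d), F (x, y) with hIdef
  have hG : Integrable (S.indicator F) := hFint.indicator hSmeas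
  have hGprod : Integrable (S.indicator F) (volume.prod volume) := by
    rwa [← Measure.volume_eq_prod]
  have hinner : ∀ x : ℝ, (∫ y, S.indicator F (x, y)) =
      (Set.Ici (0:ℝ)).indicator I x := by
    intro x
    by_cases hx : (0:ℝ) ≤ x
    · rw [Set.indicator_of_mem (Set.mem_Ici.mpr hx) I]
      have heq : (fun y => S.indicator F (x, y)) =
          (Set.Ioc x (x + d)).indicator (fun y => F (x, y)) := by
        funext y
        by_cases hy : y ∈ Set.Ioc x (x + d)
        · rw [Set.indicator_of_mem hy]
          have : (x, y) ∈ S := ⟨⟨hx, hy.1⟩, hy.2⟩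
          rw [Set.indicator_of_mem this]
        · rw [Set.indicator_of_notMem hy]
          have : (x, y) ∉ S := by
            rintro ⟨⟨_, h2⟩, h3⟩
            exact hy ⟨h2, h3⟩
          rw [Set.indicator_of_notMem this]
      rw [heq, integral_indicator measurableSet_Ioc]
    · rw [Set.indicator_of_notMem (by simpa using hx) I]
      have heq : (fun y => S.indicator F (x, y)) = fun _ => (0:ℝ) := by
        funext y
        have : (x, y) ∉ S := by rintro ⟨⟨h1, _⟩, _⟩; exact hx h1
        rw [Set.indicator_of_notMem this]
      rw [heq, integral_zero]
  have hSint : ∫ p in S, F p = ∫ x in Set.Ici (0:ℝ), I x := by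
    rw [← integral_indicator hSmeas]
    have h1 : ∫ p, S.indicator F p = ∫ p, S.indicator F p ∂(volume.prod volume) := by
      rw [← Measure.volume_eq_prod]
    rw [h1, MeasureTheory.integral_prod _ hGprod]
    simp_rw [hinner]
    rw [integral_indicator measurableSet_Ici]
  have hIint : IntegrableOn I (Set.Ici (0:ℝ)) := by
    have h1 : Integrable (fun x => ∫ y, S.indicator F (x, y)) := hGprod.integral_prod_left
    have h2 : Integrable ((Set.Ici (0:ℝ)).indicator I) := by
      have : (fun x => ∫ y, S.indicator F (x, y)) = (Set.Ici (0:ℝ)).indicator I :=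
        funext hinner
      rwa [this] at h1
    rwa [integrable_indicator_iff measurableSet_Ici] at h2
  have hIeq : ∀ x : ℝ, I x = ∫ t in (0:ℝ)..d, F (x, x + t) := by
    intro x
    have h1 : ∫ t in (0:ℝ)..d, F (x, x + t) = ∫ v in (x+0)..(x+d), F (x, v) :=
      intervalIntegral.integral_comp_add_left (fun v => F (x, v)) x
    rw [hIdef]
    simp only [add_zero] at h1
    rw [h1, intervalIntegral.integral_of_le (by linarith)]
  have key : ∀ x : ℝ, ‖φ (x, x)‖ ^ 2 ≤ (1/d + 1) * I x := by
    intro x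
    rw [hIeq x]
    exact trace_pointwise d hd φ hφ x
  have hdiagsupp : HasCompactSupport (fun x : ℝ => ‖φ (x, x)‖ ^ 2) := by
    have hiso : Isometry (fun x : ℝ => ((x : ℝ), x)) := by
      apply Isometry.of_dist_eq
      intro a b
      simp [Prod.dist_eq]
    have h1 : HasCompactSupport (fun x : ℝ => φ (x, x)) :=
      hsupp.comp_isClosedEmbedding hiso.isClosedEmbedding
    exact h1.comp_left (g := fun z : ℂ => ‖z‖ ^ 2) (by simp)
  have hdiagc : Continuous (fun x : ℝ => ‖φ (x, x)‖ ^ 2) := by fun_prop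
  have hdiagint : Integrable (fun x : ℝ => ‖φ (x, x)‖ ^ 2) :=
    hdiagc.integrable_of_hasCompactSupport hdiagsupp
  calc ∫ x in Set.Ici (0:ℝ), ‖φ (x, x)‖ ^ 2
      ≤ ∫ x in Set.Ici (0:ℝ), (1/d + 1) * I x := by
        apply setIntegral_mono_on hdiagint.integrableOn (hIint.const_mul _)
          measurableSet_Ici
        exact fun x _ => key x
    _ = (1/d + 1) * ∫ x in Set.Ici (0:ℝ), I x := by
        rw [integral_const_mul]
    _ = (1/d + 1) * ∫ p in S, F p := by rw [hSint]
    _ ≤ (1/d + 1) * ∫ p in pairDomain d, F p := by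
        apply mul_le_mul_of_nonneg_left _ (by positivity)
        apply setIntegral_mono_set hFint.integrableOn
          (Filter.Eventually.of_forall fun p => hFnn p)
          (HasSubset.Subset.eventuallyLE hSsub)
end

section
/- Let β > 0, E ∈ ℝ and μ < E. Then lim_{L→∞} (1/L)·Σ_{m=1}^∞ 1/(e^{β(E + (mπ/L)² − μ)} − 1) = (1/π)·∫₀^∞ 1/(e^{β(E + x² − μ)} − 1) dx, where L ranges over the positive reals. -/
open Real Set Filter MeasureTheory

/-- for `β > 0`, `E ∈ ℝ`, `μ < E`,
`(1/L) Σ_{m≥1} 1/(e^{β(E + (mπ/L)² - μ)} - 1) → (1/π) ∫₀^∞ 1/(e^{β(E + x² - μ)} - 1) dx`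
as `L → ∞` (the sum over `m ≥ 1` is encoded as a sum over `m : ℕ` of `m + 1`). -/
theorem riemann_sum_thermodynamic_limit
    (β E μ : ℝ) (hβ : 0 < β) (hμ : μ < E) :
    Filter.Tendsto
      (fun L : ℝ => (1 / L) *
        ∑' m : ℕ, (Real.exp (β * (E + (((m : ℝ) + 1) * π / L) ^ 2 - μ)) - 1)⁻¹)
      Filter.atTop
      (nhds ((1 / π) *
        ∫ x in Set.Ioi (0:ℝ), (Real.exp (β * (E + x ^ 2 - μ)) - 1)⁻¹)) := by
  have hπ : 0 < π := Real.pi_pos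
  set f : ℝ → ℝ := fun x => (Real.exp (β * (E + x ^ 2 - μ)) - 1)⁻¹ with hfdef
  have hc : 0 < Real.exp (β * (E - μ)) - 1 := by
    have : (1:ℝ) < Real.exp (β * (E - μ)) :=
      Real.one_lt_exp_iff.2 (mul_pos hβ (by linarith))
    linarith
  have hD : ∀ x : ℝ, 0 < Real.exp (β * (E + x ^ 2 - μ)) - 1 := by
    intro x
    have : (1:ℝ) < Real.exp (β * (E + x ^ 2 - μ)) := by
      refine Real.one_lt_exp_iff.2 (mul_pos hβ ?_)
      nlinarith [sq_nonneg x]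
    linarith
  have hfpos : ∀ x : ℝ, 0 < f x := fun x => inv_pos.2 (hD x)
  have hfanti : AntitoneOn f (Ici 0) := by
    intro x hx y hy hxy
    apply inv_anti₀ (hD x)
    have : x ^ 2 ≤ y ^ 2 := by nlinarith [mem_Ici.1 hx]
    have : β * (E + x ^ 2 - μ) ≤ β * (E + y ^ 2 - μ) := by nlinarith
    linarith [Real.exp_le_exp.2 this]
  have hfcont : Continuous f := by
    apply Continuous.inv₀
    · exact (Real.continuous_exp.comp (by continuity)).sub continuous_const
    · exact fun x => (hD x).ne'
  -- integrability via Gaussian domination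
  have hbound : ∀ x : ℝ, f x ≤ (Real.exp (β * (E - μ)) - 1)⁻¹ * Real.exp (-β * x ^ 2) := by
    intro x
    have h1 : Real.exp (β * (E - μ)) * Real.exp (β * x ^ 2)
        = Real.exp (β * (E + x ^ 2 - μ)) := by
      rw [← Real.exp_add]; ring_nf
    have h2 : (1:ℝ) ≤ Real.exp (β * x ^ 2) :=
      Real.one_le_exp (by positivity)
    have h3 : (Real.exp (β * (E - μ)) - 1) * Real.exp (β * x ^ 2)
        ≤ Real.exp (β * (E + x ^ 2 - μ)) - 1 := by nlinarith
    have h4 : f x ≤ ((Real.exp (β * (E - μ)) - 1) * Real.exp (β * x ^ 2))⁻¹ :=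
      inv_anti₀ (by positivity) h3
    calc f x ≤ ((Real.exp (β * (E - μ)) - 1) * Real.exp (β * x ^ 2))⁻¹ := h4
      _ = (Real.exp (β * (E - μ)) - 1)⁻¹ * Real.exp (-β * x ^ 2) := by
          rw [mul_inv, ← Real.exp_neg]; ring_nf
  have hfintR : Integrable f := by
    refine Integrable.mono ((integrable_exp_neg_mul_sq hβ).const_mul
      ((Real.exp (β * (E - μ)) - 1)⁻¹)) hfcont.aestronglyMeasurable ?_
    filter_upwards with x
    rw [Real.norm_eq_abs, Real.norm_eq_abs, abs_of_pos (hfpos x), abs_of_pos (by positivity)]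
    exact hbound x
  have hfint : IntegrableOn f (Ioi 0) := hfintR.integrableOn
  set I := ∫ x in Ioi (0:ℝ), f x with hI
  -- key comparison for each step size h > 0
  have key : ∀ h : ℝ, 0 < h →
      I - h * f 0 ≤ h * ∑' m : ℕ, f (h * ((m:ℝ) + 1)) ∧
      h * ∑' m : ℕ, f (h * ((m:ℝ) + 1)) ≤ I := by
    intro h h0
    set g : ℝ → ℝ := fun x => f (h * x) with hgdef
    have hganti : AntitoneOn g (Ici 0) := by
      intro x hx y hy hxy
      exact hfanti (mem_Ici.2 (mul_nonneg h0.le (mem_Ici.1 hx)))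
        (mem_Ici.2 (mul_nonneg h0.le (mem_Ici.1 hy)))
        (mul_le_mul_of_nonneg_left hxy h0.le)
    -- upper bound on partial sums
    have hup : ∀ n : ℕ, ∑ i ∈ Finset.range n, f (h * ((i:ℝ) + 1)) ≤ h⁻¹ * I := by
      intro n
      have hA : AntitoneOn g (Icc (0:ℝ) (0 + n)) := hganti.mono Icc_subset_Ici_self
      have := hA.sum_le_integral
      have heq : ∀ i : ℕ, g ((0:ℝ) + ((i:ℝ) + 1)) = f (h * ((i:ℝ) + 1)) := by
        intro i; simp [hgdef]
      have hsum : ∑ i ∈ Finset.range n, f (h * ((i:ℝ) + 1)) ≤ ∫ x in (0:ℝ)..(0 + n), g x := by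
        refine le_trans (le_of_eq (Finset.sum_congr rfl fun i _ => ?_)) this
        show f (h * ((i:ℝ) + 1)) = g (0 + ((i:ℕ) + 1 : ℕ))
        simp only [hgdef]
        exact congrArg f (by push_cast; ring)
      have hchg : ∫ x in (0:ℝ)..(0 + n), g x = h⁻¹ • ∫ x in (h * 0)..(h * (0 + n)), f x := by
        rw [hgdef]
        exact intervalIntegral.integral_comp_mul_left f h0.ne'
      have hle : ∫ x in (h * 0)..(h * (0 + n)), f x ≤ I := by
        rw [mul_zero, zero_add,
          intervalIntegral.integral_of_le (by positivity)]
        refine setIntegral_mono_set hfint ?_ ?_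
        · filter_upwards with x using (hfpos x).le
        · filter_upwards with x hx using Ioc_subset_Ioi_self hx
      rw [hchg] at hsum
      calc ∑ i ∈ Finset.range n, f (h * ((i:ℝ) + 1))
          ≤ h⁻¹ • ∫ x in (h * 0)..(h * (0 + n)), f x := hsum
        _ ≤ h⁻¹ * I := by
            rw [smul_eq_mul]
            exact mul_le_mul_of_nonneg_left hle (by positivity)
    have hsummable : Summable (fun m : ℕ => f (h * ((m:ℝ) + 1))) :=
      summable_of_sum_range_le (fun n => (hfpos _).le) hup
    have htsum_le : ∑' m : ℕ, f (h * ((m:ℝ) + 1)) ≤ h⁻¹ * I :=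
      Real.tsum_le_of_sum_range_le (fun n => (hfpos _).le) hup
    constructor
    · -- lower bound
      have hlow : ∀ n : ℕ, ∫ x in (h:ℝ)..(h * (1 + n)), f x
          ≤ h * ∑' m : ℕ, f (h * ((m:ℝ) + 1)) := by
        intro n
        have hA : AntitoneOn g (Icc (1:ℝ) (1 + n)) :=
          hganti.mono (Icc_subset_Ici_self.trans (Ici_subset_Ici.2 (by norm_num)))
        have h1 := hA.integral_le_sum
        have h2 : ∑ i ∈ Finset.range n, g ((1:ℝ) + i) ≤ ∑' m : ℕ, f (h * ((m:ℝ) + 1)) := by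
          have : ∑ i ∈ Finset.range n, g ((1:ℝ) + i)
              = ∑ i ∈ Finset.range n, f (h * ((i:ℝ) + 1)) := by
            apply Finset.sum_congr rfl
            intro i _
            simp [hgdef, add_comm]
          rw [this]
          exact Summable.sum_le_tsum _ (fun i _ => (hfpos _).le) hsummable
        have hchg : ∫ x in (1:ℝ)..(1 + n), g x = h⁻¹ • ∫ x in (h * 1)..(h * (1 + n)), f x := by
          rw [hgdef]
          exact intervalIntegral.integral_comp_mul_left f h0.ne'
        have : h⁻¹ * ∫ x in (h * 1)..(h * (1 + n)), f x
            ≤ ∑' m : ℕ, f (h * ((m:ℝ) + 1)) := by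
          rw [← smul_eq_mul, ← hchg]
          exact le_trans h1 h2
        have := mul_le_mul_of_nonneg_left this h0.le
        rw [← mul_assoc, mul_inv_cancel₀ h0.ne', one_mul] at this
        rwa [mul_one] at this
      -- pass to the limit n → ∞
      have hIoih : IntegrableOn f (Ioi h) :=
        hfint.mono_set (Ioi_subset_Ioi h0.le)
      have htendsto : Tendsto (fun n : ℕ => ∫ x in (h:ℝ)..(h * (1 + n)), f x)
          atTop (nhds (∫ x in Ioi h, f x)) := by
        apply intervalIntegral_tendsto_integral_Ioi _ hIoih
        apply Filter.tendsto_atTop_mono (fun n : ℕ => ?_)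
          (tendsto_natCast_atTop_atTop.const_mul_atTop h0)
        nlinarith [Nat.cast_nonneg (α := ℝ) n]
      have hIoih_le : ∫ x in Ioi h, f x ≤ h * ∑' m : ℕ, f (h * ((m:ℝ) + 1)) :=
        le_of_tendsto htendsto (Filter.Eventually.of_forall hlow)
      -- split I
      have hsplit : I = (∫ x in Ioc 0 h, f x) + ∫ x in Ioi h, f x := by
        rw [hI, ← Ioc_union_Ioi_eq_Ioi h0.le]
        rw [setIntegral_union (Ioc_disjoint_Ioi le_rfl) measurableSet_Ioi
          (hfint.mono_set Ioc_subset_Ioi_self) hIoih]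
      have hIoc_le : ∫ x in Ioc 0 h, f x ≤ h * f 0 := by
        have h1 : ∫ x in Ioc (0:ℝ) h, f x ≤ ∫ _ in Ioc (0:ℝ) h, f 0 := by
          refine setIntegral_mono_on (hfint.mono_set Ioc_subset_Ioi_self)
            (integrableOn_const (by simp [h0])) measurableSet_Ioc ?_
          intro x hx
          exact hfanti (mem_Ici.2 le_rfl) (mem_Ici.2 (le_of_lt hx.1)) hx.1.le
        have h2 : ∫ _ in Ioc (0:ℝ) h, f 0 = h * f 0 := by
          rw [setIntegral_const, Measure.real, Real.volume_Ioc, smul_eq_mul,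
            ENNReal.toReal_ofReal (by linarith)]
          ring_nf
        linarith
      linarith
    · -- upper bound
      calc h * ∑' m : ℕ, f (h * ((m:ℝ) + 1)) ≤ h * (h⁻¹ * I) :=
            mul_le_mul_of_nonneg_left htsum_le h0.le
        _ = I := by field_simp
  -- squeeze as L → ∞
  have main : Tendsto (fun L : ℝ => (π / L) * ∑' m : ℕ, f ((π / L) * ((m:ℝ) + 1)))
      atTop (nhds I) := by
    have hπL : Tendsto (fun L : ℝ => π / L) atTop (nhds 0) :=
      tendsto_const_nhds.div_atTop tendsto_id
    refine tendsto_of_tendsto_of_tendsto_of_le_of_le'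
      (g := fun L : ℝ => I - (π / L) * f 0) (h := fun _ : ℝ => I) ?_ ?_ ?_ ?_
    · have h2 : Tendsto (fun L : ℝ => I - (π / L) * f 0) atTop (nhds (I - 0 * f 0)) :=
        tendsto_const_nhds.sub (hπL.mul_const (f 0))
      simpa using h2
    · exact tendsto_const_nhds
    · filter_upwards [eventually_gt_atTop (0:ℝ)] with L hL
      exact (key (π / L) (by positivity)).1
    · filter_upwards [eventually_gt_atTop (0:ℝ)] with L hL
      exact (key (π / L) (by positivity)).2
  have final := main.const_mul (1 / π)
  refine Tendsto.congr (fun L => ?_) final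
  have halg : (1 / π) * (π / L) = 1 / L := by
    rw [div_mul_div_comm, one_mul, ← div_div, div_self hπ.ne']
  have hts : ∑' m : ℕ, f ((π / L) * ((m:ℝ) + 1))
      = ∑' m : ℕ, (Real.exp (β * (E + (((m : ℝ) + 1) * π / L) ^ 2 - μ)) - 1)⁻¹ := by
    apply tsum_congr
    intro m
    have : (π / L) * ((m:ℝ) + 1) = ((m : ℝ) + 1) * π / L := by ring
    rw [hfdef, this]
  rw [← mul_assoc, halg, hts]
end

section
/- Let ℓ > 0, β > 0 and μ < π²/(4ℓ²). Setting ε_n := ((n + 1/2)·π/ℓ)² for n ∈ ℕ, one has lim_{L→∞} (1/L)·Σ_{n=0}^∞ Σ_{m=1}^∞ 1/(e^{β(ε_n + (mπ/L)² − μ)} − 1) = (1/π)·Σ_{n=0}^∞ ∫₀^∞ 1/(e^{β·ε_n}·e^{β(x² − μ)} − 1) dx, where L ranges over the positive reals and both sides are finite. -/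
open Real Set Filter MeasureTheory


lemma inv_exp_sub_one_le {δ y : ℝ} (hδ : 0 < δ) (hy : δ ≤ y) :
    (Real.exp y - 1)⁻¹ ≤ (1 - Real.exp (-δ))⁻¹ * Real.exp (-y) := by
  have h2 : 0 < 1 - Real.exp (-δ) := by
    have : Real.exp (-δ) < 1 := Real.exp_lt_one_iff.2 (by linarith)
    linarith
  have hy0 : 0 < y := lt_of_lt_of_le hδ hy
  have h4 : (1:ℝ) ≤ Real.exp (y - δ) := Real.one_le_exp (by linarith)
  have h5 : Real.exp (-δ) * Real.exp y = Real.exp (y - δ) := by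
    rw [← Real.exp_add]; ring_nf
  have key : (1 - Real.exp (-δ)) * Real.exp y ≤ Real.exp y - 1 := by nlinarith
  calc (Real.exp y - 1)⁻¹ ≤ ((1 - Real.exp (-δ)) * Real.exp y)⁻¹ := by
        apply inv_anti₀ (mul_pos h2 (Real.exp_pos _)) key
    _ = (1 - Real.exp (-δ))⁻¹ * Real.exp (-y) := by rw [mul_inv, Real.exp_neg]; rw [Real.exp_neg]


lemma riemann_sum_le_integral {f : ℝ → ℝ} {d : ℝ} (hd : 0 < d)
    (hmono : AntitoneOn f (Ici 0)) (hnn : ∀ x ∈ Ici (0:ℝ), 0 ≤ f x)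
    (hint : IntegrableOn f (Ioi 0)) :
    ∀ N : ℕ, ∑ m ∈ Finset.range N, f (((m:ℝ) + 1) * d) ≤ d⁻¹ * ∫ x in Ioi (0:ℝ), f x := by
  intro N
  have hm : AntitoneOn (fun x => f (d * x)) (Icc (0:ℝ) (0 + N)) := by
    intro a ha b hb hab
    exact hmono (mem_Ici.2 (by have := ha.1; positivity))
      (mem_Ici.2 (by have := hb.1; positivity)) (by nlinarith)
  have h1 := hm.sum_le_integral
  have h2 : ∀ i : ℕ, f (d * ((0:ℝ) + (i + 1 : ℕ))) = f (((i:ℝ) + 1) * d) := by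
    intro i; congr 1; push_cast; ring
  rw [Finset.sum_congr rfl (fun i _ => h2 i)] at h1
  have h3 : (∫ x in (0:ℝ)..(0 + N), f (d * x)) = d⁻¹ * ∫ x in (d*0)..(d*N), f x := by
    rw [intervalIntegral.integral_comp_mul_left f hd.ne', smul_eq_mul]; norm_num
  refine h1.trans ?_
  rw [h3]
  gcongr
  rw [mul_zero, intervalIntegral.integral_of_le (by positivity)]
  apply setIntegral_mono_set hint
  · filter_upwards [ae_restrict_mem measurableSet_Ioi] with x hx
    exact hnn x (mem_Ici.2 (le_of_lt (mem_Ioi.1 hx)))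
  · exact HasSubset.Subset.eventuallyLE Ioc_subset_Ioi_self


lemma integral_le_riemann_sum {f : ℝ → ℝ} {d : ℝ} (hd : 0 < d)
    (hmono : AntitoneOn f (Ici 0)) (hnn : ∀ x ∈ Ici (0:ℝ), 0 ≤ f x)
    (hint : IntegrableOn f (Ioi 0))
    (hsum : Summable fun m : ℕ => f (((m:ℝ) + 1) * d)) :
    d⁻¹ * (∫ x in Ioi (0:ℝ), f x) - f 0 ≤ ∑' m : ℕ, f (((m:ℝ) + 1) * d) := by
  have hnn' : ∀ m : ℕ, 0 ≤ f (((m:ℝ) + 1) * d) := fun m => hnn _ (mem_Ici.2 (by positivity))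
  -- Step 1: d⁻¹ * ∫_{Ioi d} f ≤ tsum
  have key : d⁻¹ * (∫ x in Ioi d, f x) ≤ ∑' m : ℕ, f (((m:ℝ) + 1) * d) := by
    have hintd : IntegrableOn f (Ioi d) := hint.mono_set (Ioi_subset_Ioi hd.le)
    have lim : Tendsto (fun N : ℕ => d⁻¹ * ∫ x in d..(d * (1 + N)), f x) atTop
        (nhds (d⁻¹ * ∫ x in Ioi d, f x)) := by
      apply Tendsto.const_mul
      have : Tendsto (fun N : ℕ => d * (1 + (N:ℝ))) atTop atTop := by
        apply Tendsto.const_mul_atTop hd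
        exact tendsto_atTop_add_const_left _ _ tendsto_natCast_atTop_atTop
      have := intervalIntegral_tendsto_integral_Ioi d hintd this
      simpa using this
    refine le_of_tendsto lim (Filter.Eventually.of_forall fun N => ?_)
    -- d⁻¹ ∫_d^{d(1+N)} f ≤ Σ_{i<N} f((i+1)d) ≤ tsum
    have hm : AntitoneOn (fun x => f (d * x)) (Icc (1:ℝ) (1 + N)) := by
      intro a ha b hb hab
      exact hmono (mem_Ici.2 (by nlinarith [ha.1])) (mem_Ici.2 (by nlinarith [hb.1]))
        (by nlinarith)
    have h1 := hm.integral_le_sum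
    have h2 : ∀ i : ℕ, f (d * ((1:ℝ) + i)) = f (((i:ℝ) + 1) * d) := by
      intro i; congr 1; push_cast; ring
    rw [Finset.sum_congr rfl (fun i _ => h2 i)] at h1
    have h3 : (∫ x in (1:ℝ)..(1 + N), f (d * x)) = d⁻¹ * ∫ x in d..(d * (1 + N)), f x := by
      rw [intervalIntegral.integral_comp_mul_left f hd.ne', smul_eq_mul, mul_one]
    rw [h3] at h1
    calc d⁻¹ * ∫ x in d..(d * (1 + N)), f x ≤ ∑ i ∈ Finset.range N, f (((i:ℝ) + 1) * d) := h1
      _ ≤ ∑' m : ℕ, f (((m:ℝ) + 1) * d) := Summable.sum_le_tsum _ (fun i _ => hnn' i) hsum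
  -- Step 2: ∫_{Ioi 0} f ≤ ∫_{Ioi d} f + d * f 0
  have split : (∫ x in Ioi (0:ℝ), f x) = (∫ x in Ioc 0 d, f x) + ∫ x in Ioi d, f x := by
    rw [← setIntegral_union (Ioc_disjoint_Ioi le_rfl) measurableSet_Ioi
      (hint.mono_set Ioc_subset_Ioi_self) (hint.mono_set (Ioi_subset_Ioi hd.le)),
      Ioc_union_Ioi_eq_Ioi hd.le]
  have bnd : (∫ x in Ioc (0:ℝ) d, f x) ≤ d * f 0 := by
    have : (∫ x in Ioc (0:ℝ) d, f x) ≤ ∫ _ in Ioc (0:ℝ) d, f 0 := by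
      apply setIntegral_mono_on (hint.mono_set Ioc_subset_Ioi_self)
        (integrableOn_const (by simp) (by simp))
        measurableSet_Ioc
      intro x hx
      exact hmono (mem_Ici.2 le_rfl) (mem_Ici.2 (le_of_lt hx.1)) (le_of_lt hx.1)
    simpa [Real.volume_Ioc, ENNReal.toReal_ofReal hd.le, max_eq_left hd.le] using this
  have : d⁻¹ * (∫ x in Ioi (0:ℝ), f x) - f 0 ≤ d⁻¹ * ∫ x in Ioi d, f x := by
    rw [split]
    have : d⁻¹ * (∫ x in Ioc (0:ℝ) d, f x) ≤ f 0 := by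
      rw [inv_mul_le_iff₀ hd]; linarith [bnd]
    nlinarith [this]
  linarith [key, this]


lemma summable_exp_neg_sq {c a : ℝ} (hc : 0 < c) (ha : 0 ≤ a) :
    Summable fun n : ℕ => Real.exp (-(c * ((n:ℝ) + a)^2)) := by
  have hgeom : Summable fun n : ℕ => Real.exp (-c) ^ n :=
    summable_geometric_of_lt_one (Real.exp_pos _).le (Real.exp_lt_one_iff.2 (by linarith))
  apply Summable.of_nonneg_of_le (fun n => (Real.exp_pos _).le) (fun n => ?_) hgeom
  rw [← Real.exp_nat_mul]
  apply Real.exp_le_exp.2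
  have h1 : (n:ℝ) ≤ ((n:ℝ) + a)^2 := by
    rcases Nat.eq_zero_or_pos n with h | h
    · subst h; simp; positivity
    · have : (1:ℝ) ≤ (n:ℝ) := by exact_mod_cast h
      nlinarith
  nlinarith

noncomputable def epsAux (ℓ : ℝ) (n : ℕ) : ℝ := (((n:ℝ) + 1/2) * π / ℓ) ^ 2
noncomputable def fAux (ℓ β μ : ℝ) (n : ℕ) (x : ℝ) : ℝ :=
  (Real.exp (β * (epsAux ℓ n + x ^ 2 - μ)) - 1)⁻¹

set_option maxHeartbeats 1000000 in
/-- for `ℓ > 0`, `β > 0`, `μ < π²/(4ℓ²)` and `ε_n = ((n + 1/2)π/ℓ)²`,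
the density of pairs in excited states converges in the thermodynamic limit:
`(1/L) Σ_n Σ_{m≥1} 1/(e^{β(ε_n + (mπ/L)² - μ)} - 1)
  → (1/π) Σ_n ∫₀^∞ 1/(e^{βε_n} e^{β(x² - μ)} - 1) dx` as `L → ∞`,
and both sides are finite (the double sum is summable for each `L > 0` and the series
of integrals converges). The inner sum over `m ≥ 1` is encoded by `m + 1`, `m : ℕ`. -/
theorem excited_states_density_thermodynamic_limit
    (ℓ β μ : ℝ) (hℓ : 0 < ℓ) (hβ : 0 < β) (hμ : μ < π ^ 2 / (4 * ℓ ^ 2)) :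
    (∀ L : ℝ, 0 < L → Summable (fun nm : ℕ × ℕ =>
      (Real.exp (β * ((((nm.1 : ℝ) + 1/2) * π / ℓ) ^ 2 +
        (((nm.2 : ℝ) + 1) * π / L) ^ 2 - μ)) - 1)⁻¹)) ∧
    Summable (fun n : ℕ =>
      ∫ x in Set.Ioi (0:ℝ),
        (Real.exp (β * (((n : ℝ) + 1/2) * π / ℓ) ^ 2) *
          Real.exp (β * (x ^ 2 - μ)) - 1)⁻¹) ∧
    Filter.Tendsto
      (fun L : ℝ => (1 / L) *
        ∑' nm : ℕ × ℕ,
          (Real.exp (β * ((((nm.1 : ℝ) + 1/2) * π / ℓ) ^ 2 +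
            (((nm.2 : ℝ) + 1) * π / L) ^ 2 - μ)) - 1)⁻¹)
      Filter.atTop
      (nhds ((1 / π) *
        ∑' n : ℕ,
          ∫ x in Set.Ioi (0:ℝ),
            (Real.exp (β * (((n : ℝ) + 1/2) * π / ℓ) ^ 2) *
              Real.exp (β * (x ^ 2 - μ)) - 1)⁻¹)) := by
  have hπ : (0:ℝ) < π := pi_pos
  obtain ⟨δ, hδdef⟩ : ∃ δ : ℝ, δ = β * (π ^ 2 / (4 * ℓ ^ 2) - μ) := ⟨_, rfl⟩
  have hδ : 0 < δ := by rw [hδdef]; apply mul_pos hβ; linarith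
  obtain ⟨C, hCdef⟩ : ∃ C : ℝ, C = (1 - Real.exp (-δ))⁻¹ := ⟨_, rfl⟩
  have hC : 0 < C := by
    rw [hCdef]
    apply inv_pos.2
    have : Real.exp (-δ) < 1 := Real.exp_lt_one_iff.2 (by linarith)
    linarith
  -- basic facts about epsAux
  have hε0 : ∀ n : ℕ, π ^ 2 / (4 * ℓ ^ 2) ≤ epsAux ℓ n := by
    intro n
    have h1 : (0:ℝ) ≤ (1/2) * π / ℓ := by positivity
    have h2 : (1/2) * π / ℓ ≤ ((n:ℝ) + 1/2) * π / ℓ := by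
      have hn : (1/2:ℝ) ≤ (n:ℝ) + 1/2 := by linarith [Nat.cast_nonneg (α := ℝ) n]
      gcongr
    have := pow_le_pow_left₀ h1 h2 2
    calc π ^ 2 / (4 * ℓ ^ 2) = ((1/2) * π / ℓ) ^ 2 := by field_simp; ring
      _ ≤ epsAux ℓ n := this
  have harg : ∀ (n : ℕ) (x : ℝ), δ ≤ β * (epsAux ℓ n + x ^ 2 - μ) := by
    intro n x
    have h1 := hε0 n
    have h2 := sq_nonneg x
    rw [hδdef]
    nlinarith
  have hfpos : ∀ (n : ℕ) (x : ℝ), 0 < Real.exp (β * (epsAux ℓ n + x ^ 2 - μ)) - 1 := by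
    intro n x
    have h1 : (1:ℝ) < Real.exp (β * (epsAux ℓ n + x ^ 2 - μ)) :=
      Real.one_lt_exp_iff.2 (lt_of_lt_of_le hδ (harg n x))
    linarith
  have hfnn : ∀ (n : ℕ) (x : ℝ), 0 ≤ fAux ℓ β μ n x :=
    fun n x => inv_nonneg.2 (hfpos n x).le
  have hfle : ∀ (n : ℕ) (x : ℝ), fAux ℓ β μ n x ≤
      (C * Real.exp (β * μ) * Real.exp (-(β * epsAux ℓ n))) * Real.exp (-(β * x ^ 2)) := by
    intro n x
    rw [hCdef]
    refine (inv_exp_sub_one_le hδ (harg n x)).trans_eq ?_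
    rw [show -(β * (epsAux ℓ n + x ^ 2 - μ)) =
      β * μ + -(β * epsAux ℓ n) + -(β * x ^ 2) by ring, Real.exp_add, Real.exp_add]
    ring
  have hmono : ∀ n : ℕ, AntitoneOn (fAux ℓ β μ n) (Ici 0) := by
    intro n a ha b hb hab
    unfold fAux
    apply inv_anti₀ (hfpos n a)
    have : a ^ 2 ≤ b ^ 2 := pow_le_pow_left₀ ha hab 2
    have := Real.exp_le_exp.2 (show β * (epsAux ℓ n + a ^ 2 - μ) ≤
      β * (epsAux ℓ n + b ^ 2 - μ) by nlinarith)
    linarith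
  have hsum1 : Summable fun n : ℕ => Real.exp (-(β * epsAux ℓ n)) := by
    apply (summable_exp_neg_sq (c := β * (π/ℓ)^2) (a := 1/2) (by positivity) (by norm_num)).congr
    intro n
    congr 1
    unfold epsAux
    field_simp
  have hsum2 : ∀ L : ℝ, 0 < L →
      Summable fun m : ℕ => Real.exp (-(β * (((m:ℝ) + 1) * (π/L)) ^ 2)) := by
    intro L hL
    apply (summable_exp_neg_sq (c := β * (π/L)^2) (a := 1) (by positivity) (by norm_num)).congr
    intro m
    congr 1
    ring
  -- integrability
  have hfcont : ∀ n : ℕ, Continuous (fAux ℓ β μ n) := by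
    intro n
    unfold fAux
    exact ((Real.continuous_exp.comp (by fun_prop)).sub continuous_const).inv₀
      (fun x => (hfpos n x).ne')
  have hgauss : Integrable (fun x : ℝ => Real.exp (-(β * x ^ 2))) := by
    simpa [neg_mul] using integrable_exp_neg_mul_sq hβ
  have hfint : ∀ n : ℕ, IntegrableOn (fAux ℓ β μ n) (Ioi 0) := by
    intro n
    have hg : IntegrableOn (fun x : ℝ => (C * Real.exp (β * μ) *
        Real.exp (-(β * epsAux ℓ n))) * Real.exp (-(β * x ^ 2))) (Ioi 0) :=
      (hgauss.const_mul _).integrableOn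
    refine hg.mono' ((hfcont n).aestronglyMeasurable.restrict) ?_
    filter_upwards with x
    rw [Real.norm_of_nonneg (hfnn n x)]
    exact hfle n x
  -- integral bounds and summability of integrals
  have hInt_nonneg : ∀ n : ℕ, 0 ≤ ∫ x in Ioi (0:ℝ), fAux ℓ β μ n x := fun n =>
    setIntegral_nonneg measurableSet_Ioi (fun x _ => hfnn n x)
  have hInt_le : ∀ n : ℕ, (∫ x in Ioi (0:ℝ), fAux ℓ β μ n x) ≤
      (C * Real.exp (β * μ) * ∫ x in Ioi (0:ℝ), Real.exp (-(β * x ^ 2))) *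
        Real.exp (-(β * epsAux ℓ n)) := by
    intro n
    have hg : IntegrableOn (fun x : ℝ => (C * Real.exp (β * μ) *
        Real.exp (-(β * epsAux ℓ n))) * Real.exp (-(β * x ^ 2))) (Ioi 0) :=
      (hgauss.const_mul _).integrableOn
    calc (∫ x in Ioi (0:ℝ), fAux ℓ β μ n x)
        ≤ ∫ x in Ioi (0:ℝ), (C * Real.exp (β * μ) * Real.exp (-(β * epsAux ℓ n))) *
            Real.exp (-(β * x ^ 2)) := setIntegral_mono (hfint n) hg (fun x => hfle n x)
      _ = (C * Real.exp (β * μ) * ∫ x in Ioi (0:ℝ), Real.exp (-(β * x ^ 2))) *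
            Real.exp (-(β * epsAux ℓ n)) := by
          rw [integral_const_mul]; ring
  have hS2 : Summable fun n : ℕ => ∫ x in Ioi (0:ℝ), fAux ℓ β μ n x :=
    Summable.of_nonneg_of_le hInt_nonneg hInt_le (hsum1.mul_left _)
  -- conversions to statement form
  have hIeq : ∀ n : ℕ, (∫ x in Ioi (0:ℝ),
      (Real.exp (β * (((n : ℝ) + 1/2) * π / ℓ) ^ 2) * Real.exp (β * (x ^ 2 - μ)) - 1)⁻¹)
      = ∫ x in Ioi (0:ℝ), fAux ℓ β μ n x := by
    intro n
    apply integral_congr_ae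
    filter_upwards with x
    have h : β * (((n : ℝ) + 1/2) * π / ℓ) ^ 2 + β * (x ^ 2 - μ)
        = β * (epsAux ℓ n + x ^ 2 - μ) := by unfold epsAux; ring
    unfold fAux
    rw [← Real.exp_add, h]
  have hterm : ∀ (L : ℝ) (nm : ℕ × ℕ),
      (Real.exp (β * ((((nm.1 : ℝ) + 1/2) * π / ℓ) ^ 2 +
        (((nm.2 : ℝ) + 1) * π / L) ^ 2 - μ)) - 1)⁻¹
      = fAux ℓ β μ nm.1 (((nm.2 : ℝ) + 1) * (π / L)) := by
    intro L nm
    unfold fAux epsAux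
    simp only [mul_div_assoc]
  have hsumprod : ∀ L : ℝ, 0 < L → Summable (fun nm : ℕ × ℕ =>
      fAux ℓ β μ nm.1 (((nm.2 : ℝ) + 1) * (π / L))) := by
    intro L hL
    have hf' : (0:ℕ→ℝ) ≤ fun n : ℕ => C * Real.exp (β * μ) * Real.exp (-(β * epsAux ℓ n)) := by
      intro n
      have := hC
      positivity
    have hg' : (0:ℕ→ℝ) ≤ fun m : ℕ => Real.exp (-(β * (((m:ℝ) + 1) * (π/L)) ^ 2)) :=
      fun m => (Real.exp_pos _).le
    have hb := (hsum1.mul_left (C * Real.exp (β * μ))).mul_of_nonneg (hsum2 L hL) hf' hg'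
    exact Summable.of_nonneg_of_le (fun nm => hfnn _ _) (fun nm => hfle _ _) hb
  refine ⟨fun L hL => (hsumprod L hL).congr (fun nm => (hterm L nm).symm),
    hS2.congr (fun n => (hIeq n).symm), ?_⟩
  -- the limit
  have hA : Summable fun n : ℕ => fAux ℓ β μ n 0 := by
    apply Summable.of_nonneg_of_le (fun n => hfnn n 0) (fun n => ?_)
      (hsum1.mul_left (C * Real.exp (β * μ)))
    simpa using hfle n 0
  simp only [hIeq, hterm]
  have key : ∀ L : ℝ, 0 < L →
      ((1/π) * ∑' n, ∫ x in Ioi (0:ℝ), fAux ℓ β μ n x) - (1/L) * (∑' n, fAux ℓ β μ n 0)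
        ≤ (1/L) * ∑' nm : ℕ × ℕ, fAux ℓ β μ nm.1 (((nm.2:ℝ) + 1) * (π/L)) ∧
      (1/L) * (∑' nm : ℕ × ℕ, fAux ℓ β μ nm.1 (((nm.2:ℝ) + 1) * (π/L)))
        ≤ (1/π) * ∑' n, ∫ x in Ioi (0:ℝ), fAux ℓ β μ n x := by
    intro L hL
    have hd : 0 < π / L := by positivity
    have hprod := hsumprod L hL
    have hdecomp := (summable_prod_of_nonneg (fun nm => hfnn _ _)).1 hprod
    have htsum : (∑' nm : ℕ × ℕ, fAux ℓ β μ nm.1 (((nm.2:ℝ) + 1) * (π/L)))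
        = ∑' n, ∑' m : ℕ, fAux ℓ β μ n (((m:ℝ) + 1) * (π/L)) := Summable.tsum_prod hprod
    have hnnIci : ∀ n : ℕ, ∀ x ∈ Ici (0:ℝ), 0 ≤ fAux ℓ β μ n x := fun n x _ => hfnn n x
    have hup : ∀ n : ℕ, (∑' m : ℕ, fAux ℓ β μ n (((m:ℝ) + 1) * (π/L)))
        ≤ (π/L)⁻¹ * ∫ x in Ioi (0:ℝ), fAux ℓ β μ n x := fun n =>
      Real.tsum_le_of_sum_range_le (fun m => hfnn _ _)
        (riemann_sum_le_integral hd (hmono n) (hnnIci n) (hfint n))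
    have hlo : ∀ n : ℕ, (π/L)⁻¹ * (∫ x in Ioi (0:ℝ), fAux ℓ β μ n x) - fAux ℓ β μ n 0
        ≤ ∑' m : ℕ, fAux ℓ β μ n (((m:ℝ) + 1) * (π/L)) :=
      fun n => integral_le_riemann_sum hd (hmono n) (hnnIci n) (hfint n) (hdecomp.1 n)
    constructor
    · have h1 := Summable.tsum_le_tsum hlo ((hS2.mul_left ((π/L)⁻¹)).sub hA) hdecomp.2
      rw [Summable.tsum_sub (hS2.mul_left ((π/L)⁻¹)) hA, tsum_mul_left] at h1
      rw [htsum]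
      have h3 := mul_le_mul_of_nonneg_left h1 (by positivity : (0:ℝ) ≤ 1/L)
      calc ((1/π) * ∑' n, ∫ x in Ioi (0:ℝ), fAux ℓ β μ n x) - (1/L) * (∑' n, fAux ℓ β μ n 0)
          = (1/L) * ((π/L)⁻¹ * (∑' n, ∫ x in Ioi (0:ℝ), fAux ℓ β μ n x)
              - ∑' n, fAux ℓ β μ n 0) := by
            field_simp
        _ ≤ _ := h3
    · rw [htsum]
      have h1 := Summable.tsum_le_tsum hup hdecomp.2 (hS2.mul_left ((π/L)⁻¹))
      rw [tsum_mul_left] at h1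
      have h3 := mul_le_mul_of_nonneg_left h1 (by positivity : (0:ℝ) ≤ 1/L)
      calc (1/L) * ∑' n, ∑' m : ℕ, fAux ℓ β μ n (((m:ℝ) + 1) * (π/L))
          ≤ (1/L) * ((π/L)⁻¹ * ∑' n, ∫ x in Ioi (0:ℝ), fAux ℓ β μ n x) := h3
        _ = (1/π) * ∑' n, ∫ x in Ioi (0:ℝ), fAux ℓ β μ n x := by
            field_simp
  have hlim1 : Tendsto (fun L : ℝ =>
      ((1/π) * ∑' n, ∫ x in Ioi (0:ℝ), fAux ℓ β μ n x) - (1/L) * (∑' n, fAux ℓ β μ n 0))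
      atTop (nhds ((1/π) * ∑' n, ∫ x in Ioi (0:ℝ), fAux ℓ β μ n x)) := by
    have h0 : Tendsto (fun L : ℝ => (1/L) * (∑' n, fAux ℓ β μ n 0)) atTop (nhds 0) := by
      simpa [one_div] using tendsto_inv_atTop_zero.mul_const (∑' n, fAux ℓ β μ n 0)
    simpa using tendsto_const_nhds.sub h0
  apply tendsto_of_tendsto_of_tendsto_of_le_of_le' hlim1 tendsto_const_nhds
  · filter_upwards [eventually_gt_atTop 0] with L hL using (key L hL).1
  · filter_upwards [eventually_gt_atTop 0] with L hL using (key L hL).2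
end

section
/- Let β > 0, θ ∈ ℝ, N ∈ ℕ with N ≥ 1, C ≥ 0 and ρ > C. Let (L_j) be a sequence of positive reals with L_j → ∞, and for each j let E_j : ℕ → ℝ be a nondecreasing sequence and μ_j ∈ ℝ with μ_j < E_j(0), such that: (i) Σ_{n=0}^∞ 1/(e^{β(E_j(n) − μ_j)} − 1) = ρ·L_j for every j; (ii) the number of indices n with E_j(n) < θ is at most N for every j; and (iii) limsup_{j→∞} (1/L_j)·Σ_{n : E_j(n) ≥ θ} 1/(e^{β(E_j(n) − μ_j)} − 1) ≤ C. Then limsup_{j→∞} (1/L_j)·1/(e^{β(E_j(0) − μ_j)} − 1) ≥ (ρ − C)/N > 0; in particular the ground state occupation 1/(e^{β(E_j(0) − μ_j)} − 1) is macroscopic, i.e. limsup_{j→∞} 1/(e^{β(E_j(0) − μ_j)} − 1) = ∞. -/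
open Real Filter

/-- the abstract pigeonhole argument for Bose–Einstein condensation.
Given inverse temperature `β > 0`, a threshold `θ` (the bottom of the essential
spectrum), a uniform bound `N ≥ 1` on the number of eigenvalues below `θ`, a bound
`C ≥ 0` on the limiting density of excited pairs, and a pair density `ρ > C`; given
box sizes `L j → ∞`, nondecreasing eigenvalue sequences `E j`, and chemical potentials
`μ j < E j 0` such that the total occupation equals `ρ L j` (i), at most `N`
eigenvalues lie below `θ` (ii), and the limsup of the excited density is at most `C`
(iii); then the ground state occupation density has limsup at least `(ρ - C)/N > 0`,
and in particular the ground state occupation itself has limsup `∞`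
(macroscopic occupation). -/
theorem bose_einstein_condensation_pigeonhole
    (β θ : ℝ) (hβ : 0 < β) (N : ℕ) (hN : 1 ≤ N) (C ρ : ℝ) (hC : 0 ≤ C) (hρ : C < ρ)
    (L : ℕ → ℝ) (hLpos : ∀ j, 0 < L j) (hLtop : Filter.Tendsto L Filter.atTop Filter.atTop)
    (E : ℕ → ℕ → ℝ) (hE : ∀ j, Monotone (E j))
    (μ : ℕ → ℝ) (hμ : ∀ j, μ j < E j 0)
    (hsummable : ∀ j, Summable (fun n : ℕ => (Real.exp (β * (E j n - μ j)) - 1)⁻¹))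
    (hdensity : ∀ j, ∑' n : ℕ, (Real.exp (β * (E j n - μ j)) - 1)⁻¹ = ρ * L j)
    (hcount : ∀ j, ∀ n : ℕ, E j n < θ → n < N)
    (hexcited : Filter.limsup
      (fun j => (((1 / L j) *
        ∑' n : {n : ℕ // θ ≤ E j n}, (Real.exp (β * (E j n.1 - μ j)) - 1)⁻¹ : ℝ) : EReal))
      Filter.atTop ≤ (C : EReal)) :
    ((((ρ - C) / N : ℝ)) : EReal) ≤ Filter.limsup
      (fun j => (((1 / L j) * (Real.exp (β * (E j 0 - μ j)) - 1)⁻¹ : ℝ) : EReal))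
      Filter.atTop ∧
    0 < (ρ - C) / N ∧
    Filter.limsup
      (fun j => (((Real.exp (β * (E j 0 - μ j)) - 1)⁻¹ : ℝ) : EReal))
      Filter.atTop = ⊤ := by
  have hN0 : (0 : ℝ) < N := by exact_mod_cast Nat.lt_of_lt_of_le Nat.zero_lt_one hN
  -- notation
  set f : ℕ → ℕ → ℝ := fun j n => (Real.exp (β * (E j n - μ j)) - 1)⁻¹ with hf
  have hpos : ∀ j n, 0 < Real.exp (β * (E j n - μ j)) - 1 := by
    intro j n
    have h1 : μ j < E j n := lt_of_lt_of_le (hμ j) (hE j (Nat.zero_le n))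
    have h2 : 0 < β * (E j n - μ j) := mul_pos hβ (by linarith)
    have h3 := Real.add_one_le_exp (β * (E j n - μ j))
    linarith
  have hfpos : ∀ j n, 0 < f j n := fun j n => inv_pos.2 (hpos j n)
  have hfle : ∀ j n, f j n ≤ f j 0 := by
    intro j n
    apply inv_anti₀ (hpos j 0)
    have h1 : E j 0 ≤ E j n := hE j (Nat.zero_le n)
    have h2 : β * (E j 0 - μ j) ≤ β * (E j n - μ j) := by nlinarith
    have h3 := Real.exp_le_exp.2 h2
    linarith
  -- the excited sum
  set S : ℕ → ℝ := fun j => ∑' n : {n : ℕ // θ ≤ E j n}, f j n with hS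
  have hSnonneg : ∀ j, 0 ≤ S j := fun j => tsum_nonneg (fun n => (hfpos j n.1).le)
  -- main pointwise inequality
  have hmain : ∀ j, ρ * L j ≤ N * f j 0 + S j := by
    intro j
    rw [← hdensity j]
    set s : Set ℕ := {n | θ ≤ E j n} with hs
    have hsplit : (∑' n : s, f j n) + (∑' n : ↑sᶜ, f j n) = ∑' n, f j n :=
      Summable.tsum_subtype_add_tsum_subtype_compl (hsummable j) s
    have hfin : (↑sᶜ : Set ℕ).Finite := by
      apply Set.Finite.subset (Set.finite_Iio N)
      intro n hn
      exact hcount j n (lt_of_not_ge hn)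
    haveI : Fintype ↑(sᶜ : Set ℕ) := hfin.fintype
    have hcard : Fintype.card ↑(sᶜ : Set ℕ) ≤ N := by
      have : Fintype.card ↑(sᶜ : Set ℕ) ≤ Fintype.card (Fin N) := by
        apply Fintype.card_le_of_injective
          (fun x => (⟨x.1, hcount j x.1 (lt_of_not_ge x.2)⟩ : Fin N))
        intro a b hab
        exact Subtype.ext (congrArg Fin.val hab)
      simpa using this
    have hbound : (∑' n : ↑(sᶜ : Set ℕ), f j n) ≤ N * f j 0 := by
      rw [tsum_fintype]
      calc ∑ n : ↑(sᶜ : Set ℕ), f j n.1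
          ≤ Fintype.card ↑(sᶜ : Set ℕ) • f j 0 := by
            apply Finset.sum_le_card_nsmul
            intro x _
            exact hfle j x.1
        _ = (Fintype.card ↑(sᶜ : Set ℕ) : ℝ) * f j 0 := nsmul_eq_mul _ _
        _ ≤ N * f j 0 := by
            apply mul_le_mul_of_nonneg_right _ (hfpos j 0).le
            exact_mod_cast hcard
    have hSeq : S j = ∑' n : s, f j n := rfl
    linarith [hsplit, hbound]
  -- key: for any c < (ρ - C)/N, c ≤ limsup of ground density
  have key : ∀ c : ℝ, c < (ρ - C) / N →
      (c : EReal) ≤ Filter.limsup (fun j => (((1 / L j) * f j 0 : ℝ) : EReal)) Filter.atTop := by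
    intro c hc
    have hD : C < ρ - N * c := by
      have := (lt_div_iff₀ hN0).1 hc
      nlinarith
    have hev : ∀ᶠ j in atTop, (((1 / L j) * S j : ℝ) : EReal) < ((ρ - N * c : ℝ) : EReal) :=
      Filter.eventually_lt_of_limsup_lt
        (lt_of_le_of_lt hexcited (show (C : EReal) < ((ρ - N * c : ℝ) : EReal) by exact_mod_cast hD))
    have hev2 : ∀ᶠ j in atTop, c ≤ (1 / L j) * f j 0 := by
      filter_upwards [hev] with j hj
      have hj' : (1 / L j) * S j < ρ - N * c := by exact_mod_cast hj
      have hL := hLpos j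
      have hSval : S j < (ρ - N * c) * L j := by
        have := (div_lt_iff₀ hL).1 (by rw [div_eq_inv_mul, ← one_div]; exact hj')
        linarith [this]
      have hf0 : c * L j ≤ f j 0 := by nlinarith [hmain j]
      rw [one_div, inv_mul_eq_div, le_div_iff₀ hL]
      linarith
    exact Filter.le_limsup_of_frequently_le (hev2.mono (fun j h => by exact_mod_cast h)).frequently
  have part1 : ((((ρ - C) / N : ℝ)) : EReal) ≤ Filter.limsup
      (fun j => (((1 / L j) * f j 0 : ℝ) : EReal)) Filter.atTop := by
    by_contra h
    obtain ⟨c, h1, h2⟩ := EReal.lt_iff_exists_real_btwn.1 (not_le.1 h)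
    exact absurd (key c (by exact_mod_cast h2)) (not_le.2 h1)
  have part2 : 0 < (ρ - C) / N := div_pos (by linarith) hN0
  refine ⟨part1, part2, ?_⟩
  -- macroscopic occupation
  have key3 : ∀ M : ℝ, (M : EReal) ≤ Filter.limsup
      (fun j => ((f j 0 : ℝ) : EReal)) Filter.atTop := by
    intro M
    set δ : ℝ := (ρ - C) / N / 2 with hδdef
    have hδpos : 0 < δ := by positivity
    have hδlt : (δ : EReal) < Filter.limsup
        (fun j => (((1 / L j) * f j 0 : ℝ) : EReal)) Filter.atTop := by
      refine lt_of_lt_of_le ?_ part1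
      exact_mod_cast (by linarith : δ < (ρ - C) / N)
    have hfreq := Filter.frequently_lt_of_lt_limsup (by isBoundedDefault) hδlt
    have hevL : ∀ᶠ j in atTop, M / δ ≤ L j := hLtop.eventually_ge_atTop (M / δ)
    have hfreq2 : ∃ᶠ j in atTop, (M : EReal) ≤ ((f j 0 : ℝ) : EReal) := by
      refine (hfreq.and_eventually hevL).mono ?_
      rintro j ⟨h1, h2⟩
      have h1' : δ < (1 / L j) * f j 0 := by exact_mod_cast h1
      have hL := hLpos j
      have : M ≤ f j 0 := by
        have h3 : δ * L j ≤ f j 0 := by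
          have := (lt_div_iff₀ hL).1 (by rw [div_eq_inv_mul, ← one_div]; exact h1')
          linarith
        have h4 : M / δ * δ ≤ L j * δ := mul_le_mul_of_nonneg_right h2 hδpos.le
        rw [div_mul_cancel₀ _ hδpos.ne'] at h4
        nlinarith
      exact_mod_cast this
    exact Filter.le_limsup_of_frequently_le hfreq2
  by_contra h
  obtain ⟨c, h1, h2⟩ := EReal.lt_iff_exists_real_btwn.1 (lt_top_iff_ne_top.2 h)
  exact absurd (key3 c) (not_le.2 h1)
end
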